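/- Let M ∈ ℝ^{p×k} with p ≥ k+1, let C > 0, R > 0, and define S(M,R) = { x ∈ ℝ^p : D_j(M|x) ≤ C·D_j(M) for all 1 ≤ j ≤ k, and D_{k+1}(M|x) ≤ R }, where (M|x) is M with x appended as an extra column. Let M = U (Σ;0) V be a singular value decomposition with columns U^{(1)},…,U^{(p)} of U, and set τ_i = σ_i(M) for i ≤ k and τ_i = min(σ_k(M), R/D_k(M)) for i ≥ k+1. Then S(M,R) ⊆ { Σ_{i=1}^p y_i U^{(i)} : |y_i| ≤ C'(C,p,k)·τ_i }, for a constant C'(C,p,k) depending only on C, p, k. -/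
import Mathlib

open Matrix

noncomputable def maxSubdet {p q : ℕ} (k : ℕ) (M : Matrix (Fin p) (Fin q) ℝ) : ℝ :=
  ⨆ (f : Fin k → Fin p) (g : Fin k → Fin q) (_ : Function.Injective f)
    (_ : Function.Injective g), |(M.submatrix f g).det|

/-- Append the column `x` on the right of the matrix `M`. -/
def appendCol {p k : ℕ} (M : Matrix (Fin p) (Fin k) ℝ) (x : Fin p → ℝ) :
    Matrix (Fin p) (Fin (k + 1)) ℝ :=
  Matrix.of fun i => Fin.snoc (M i) (x i)

/-- The rectangular "diagonal" matrix `(Σ; 0)` with diagonal entries `σ`. -/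
def diagRect (p k : ℕ) (σ : Fin k → ℝ) : Matrix (Fin p) (Fin k) ℝ :=
  Matrix.of fun i j => if (i : ℕ) = (j : ℕ) then σ j else 0


section Helpers
variable {p k : ℕ}

noncomputable def sighat {k : ℕ} (σ : Fin k → ℝ) : ℕ → ℝ :=
  fun l => if h : l < k then σ ⟨l, h⟩ else 0

variable {σ : Fin k → ℝ}

lemma maxSubdet_nonneg {p q : ℕ} (k : ℕ) (M : Matrix (Fin p) (Fin q) ℝ) :
    0 ≤ maxSubdet k M := by
  refine Real.iSup_nonneg fun f => Real.iSup_nonneg fun g => Real.iSup_nonneg fun _ =>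
    Real.iSup_nonneg fun _ => abs_nonneg _

lemma maxSubdet_le {p q k : ℕ} {M : Matrix (Fin p) (Fin q) ℝ} {T : ℝ} (hT : 0 ≤ T)
    (h : ∀ (f : Fin k → Fin p) (g : Fin k → Fin q), Function.Injective f →
      Function.Injective g → |(M.submatrix f g).det| ≤ T) :
    maxSubdet k M ≤ T := by
  refine Real.iSup_le (fun f => Real.iSup_le (fun g => Real.iSup_le (fun hf =>
    Real.iSup_le (fun hg => h f g hf hg) hT) hT) hT) hT

lemma le_maxSubdet {p q k : ℕ} (M : Matrix (Fin p) (Fin q) ℝ)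
    (f : Fin k → Fin p) (g : Fin k → Fin q) (hf : Function.Injective f)
    (hg : Function.Injective g) :
    |(M.submatrix f g).det| ≤ maxSubdet k M := by
  classical
  set F : (Fin k → Fin p) → (Fin k → Fin q) → ℝ := fun f' g' =>
    ⨆ (_ : Function.Injective f') (_ : Function.Injective g'), |(M.submatrix f' g').det|
    with hF
  have h1 : |(M.submatrix f g).det| = F f g := by
    simp only [hF, ciSup_pos hf, ciSup_pos hg]
  have h2 : F f g ≤ ⨆ g', F f g' :=
    le_ciSup (Set.Finite.bddAbove (Set.finite_range _)) g
  have h3 : (⨆ g', F f g') ≤ ⨆ f', ⨆ g', F f' g' :=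
    le_ciSup (f := fun f' => ⨆ g', F f' g')
      (Set.Finite.bddAbove (Set.finite_range _)) f
  have h4 : maxSubdet k M = ⨆ f', ⨆ g', F f' g' := rfl
  rw [h4]
  exact h1 ▸ (h2.trans h3)

lemma maxSubdet_transpose {p q k : ℕ} (M : Matrix (Fin p) (Fin q) ℝ) :
    maxSubdet k Mᵀ = maxSubdet k M := by
  have key : ∀ {p q : ℕ} (M : Matrix (Fin p) (Fin q) ℝ), maxSubdet k Mᵀ ≤ maxSubdet k M := by
    intro p q M
    refine maxSubdet_le (maxSubdet_nonneg _ _) fun f g hf hg => ?_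
    have : (Mᵀ.submatrix f g) = (M.submatrix g f)ᵀ := rfl
    rw [this, det_transpose]
    exact le_maxSubdet M g f hg hf
  exact le_antisymm (key M) (by simpa using key Mᵀ)

lemma det_mul_le {j n : ℕ} (W : Matrix (Fin j) (Fin n) ℝ) (A : Matrix (Fin n) (Fin j) ℝ)
    (hW : ∀ a b, |W a b| ≤ 1) {T : ℝ} (hT : 0 ≤ T)
    (hA : ∀ m : Fin j → Fin n, Function.Injective m → |(A.submatrix m id).det| ≤ T) :
    |(W * A).det| ≤ (n : ℝ) ^ j * T := by
  classical
  have hWA : (W * A) = Matrix.of fun a => ∑ i : Fin n, W a i • A i := by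
    ext a b
    simp [Matrix.mul_apply, Finset.sum_apply]
  have expand : (W * A).det =
      ∑ m : Fin j → Fin n, (∏ a, W a (m a)) • Matrix.detRowAlternating (fun a => A (m a)) := by
    rw [hWA]
    have : (Matrix.of fun a => ∑ i : Fin n, W a i • A i).det
        = Matrix.detRowAlternating (fun a : Fin j => ∑ i : Fin n, W a i • A i) := rfl
    have this2 : (Matrix.detRowAlternating (R := ℝ) (n := Fin j))
        (fun a : Fin j => ∑ i : Fin n, W a i • A i)
        = (Matrix.detRowAlternating (R := ℝ) (n := Fin j)).toMultilinearMap
          (fun a : Fin j => ∑ i : Fin n, W a i • A i) := rfl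
    rw [this, this2, (Matrix.detRowAlternating (R := ℝ)).toMultilinearMap.map_sum
      (g := fun a i => W a i • A i)]
    refine Finset.sum_congr rfl fun m _ => ?_
    exact (Matrix.detRowAlternating (R := ℝ)).toMultilinearMap.map_smul_univ
      (fun a => W a (m a)) (fun a => A (m a))
  rw [expand]
  have hterm : ∀ m : Fin j → Fin n,
      |(∏ a, W a (m a)) • Matrix.detRowAlternating (fun a => A (m a))| ≤ T := by
    intro m
    by_cases hm : Function.Injective m
    · have h1 : Matrix.detRowAlternating (fun a => A (m a)) = (A.submatrix m id).det := rfl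
      rw [smul_eq_mul, abs_mul, h1]
      calc |∏ a, W a (m a)| * |(A.submatrix m id).det|
          ≤ 1 * T := by
            refine mul_le_mul ?_ (hA m hm) (abs_nonneg _) zero_le_one
            rw [Finset.abs_prod]
            exact Finset.prod_le_one (fun _ _ => abs_nonneg _) (fun a _ => hW a (m a))
        _ = T := one_mul T
    · rw [Function.not_injective_iff] at hm
      obtain ⟨a, b, hab, hne⟩ := hm
      have h0 : Matrix.detRowAlternating (fun a => A (m a)) = 0 := by
        have : (A.submatrix m id).det = 0 :=
          Matrix.det_zero_of_row_eq hne (by ext c; simp [hab])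
        exact this
      rw [h0, smul_zero, abs_zero]
      exact hT
  calc |∑ m : Fin j → Fin n, (∏ a, W a (m a)) • Matrix.detRowAlternating (fun a => A (m a))|
      ≤ ∑ m : Fin j → Fin n, |(∏ a, W a (m a)) • Matrix.detRowAlternating (fun a => A (m a))| :=
        Finset.abs_sum_le_sum_abs _ _
    _ ≤ ∑ _m : Fin j → Fin n, T := Finset.sum_le_sum fun m _ => hterm m
    _ = (Fintype.card (Fin j → Fin n) : ℝ) * T := by
        rw [Finset.sum_const, nsmul_eq_mul, Finset.card_univ]
    _ = (n : ℝ) ^ j * T := by rw [Fintype.card_fun, Fintype.card_fin, Fintype.card_fin]; push_cast; ring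

lemma det_submatrix_mul_left_le {p q j : ℕ} (W : Matrix (Fin p) (Fin p) ℝ)
    (A : Matrix (Fin p) (Fin q) ℝ) (hW : ∀ a b, |W a b| ≤ 1)
    (f : Fin j → Fin p) (g : Fin j → Fin q) (hg : Function.Injective g) :
    |((W * A).submatrix f g).det| ≤ (p : ℝ) ^ j * maxSubdet j A := by
  rw [Matrix.submatrix_mul W A f id g Function.bijective_id]
  refine det_mul_le _ _ (fun a b => hW (f a) b) (maxSubdet_nonneg _ _) fun m hm => ?_
  rw [Matrix.submatrix_submatrix]
  simpa using le_maxSubdet A m g hm hg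

lemma maxSubdet_mul_left_le {p q : ℕ} (j : ℕ) (W : Matrix (Fin p) (Fin p) ℝ)
    (A : Matrix (Fin p) (Fin q) ℝ) (hW : ∀ a b, |W a b| ≤ 1) :
    maxSubdet j (W * A) ≤ (p : ℝ) ^ j * maxSubdet j A := by
  exact maxSubdet_le (mul_nonneg (by positivity) (maxSubdet_nonneg _ _))
    fun f g hf hg => det_submatrix_mul_left_le W A hW f g hg

lemma maxSubdet_mul_right_le {p q : ℕ} (j : ℕ) (W : Matrix (Fin q) (Fin q) ℝ)
    (A : Matrix (Fin p) (Fin q) ℝ) (hW : ∀ a b, |W a b| ≤ 1) :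
    maxSubdet j (A * W) ≤ (q : ℝ) ^ j * maxSubdet j A := by
  rw [← maxSubdet_transpose (A * W), Matrix.transpose_mul]
  calc maxSubdet j (Wᵀ * Aᵀ) ≤ (q : ℝ) ^ j * maxSubdet j Aᵀ :=
        maxSubdet_mul_left_le j Wᵀ Aᵀ (fun a b => hW b a)
    _ = (q : ℝ) ^ j * maxSubdet j A := by rw [maxSubdet_transpose]

lemma entries_le_one {n : ℕ} {U : Matrix (Fin n) (Fin n) ℝ} (hU : Uᵀ * U = 1) :
    ∀ i j, |U i j| ≤ 1 := by
  intro i j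
  have h1 : (Uᵀ * U) j j = 1 := by rw [hU]; simp
  have h2 : ∑ l, U l j * U l j = 1 := by
    simpa [Matrix.mul_apply] using h1
  have h3 : U i j * U i j ≤ 1 := by
    rw [← h2]
    exact Finset.single_le_sum (fun l _ => mul_self_nonneg (U l j)) (Finset.mem_univ i)
  rw [← sq_le_one_iff_abs_le_one, sq]
  exact h3
lemma strictMono_nat_of_fin {j : ℕ} (h : Fin j → ℕ) (hh : StrictMono h) :
    ∀ b : Fin j, (b : ℕ) ≤ h b := by
  have key : ∀ n (hn : n < j), n ≤ h ⟨n, hn⟩ := by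
    intro n
    induction n with
    | zero => intro _; exact Nat.zero_le _
    | succ m ih =>
      intro hn
      have h1 := ih (by omega)
      have h2 : h ⟨m, by omega⟩ < h ⟨m + 1, hn⟩ := hh (by simp [Fin.lt_def])
      omega
  intro b
  have := key b b.2
  simpa using this

lemma prod_antitone_le {j : ℕ} (g : Fin j → ℕ) (hg : Function.Injective g)
    (σ : ℕ → ℝ) (hσ0 : ∀ l, 0 ≤ σ l) (hσa : Antitone σ) :
    ∏ b : Fin j, σ (g b) ≤ ∏ b : Fin j, σ (b : ℕ) := by
  classical
  set s := Tuple.sort g with hs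
  have hmono : Monotone (g ∘ s) := Tuple.monotone_sort g
  have hinj : Function.Injective (g ∘ s) := hg.comp s.injective
  have hstrict : StrictMono (g ∘ s) := hmono.strictMono_of_injective hinj
  have hle : ∀ b : Fin j, (b : ℕ) ≤ (g ∘ s) b := strictMono_nat_of_fin _ hstrict
  calc ∏ b : Fin j, σ (g b) = ∏ b : Fin j, σ (g (s b)) :=
        (Equiv.prod_comp s (fun b => σ (g b))).symm
    _ ≤ ∏ b : Fin j, σ (b : ℕ) :=
        Finset.prod_le_prod (fun b _ => hσ0 _) (fun b _ => hσa (hle b))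

lemma sighat_nonneg (hσ0 : ∀ i, 0 ≤ σ i) : ∀ l, 0 ≤ sighat σ l := by
  intro l; unfold sighat; split
  · exact hσ0 _
  · exact le_refl 0

lemma sighat_antitone (hσ0 : ∀ i, 0 ≤ σ i)
    (hσa : ∀ i j : Fin k, i ≤ j → σ j ≤ σ i) : Antitone (sighat σ) := by
  intro a b hab
  unfold sighat
  by_cases hb : b < k
  · have ha : a < k := lt_of_le_of_lt hab hb
    rw [dif_pos ha, dif_pos hb]
    exact hσa ⟨a, ha⟩ ⟨b, hb⟩ hab
  · rw [dif_neg hb]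
    split
    · exact hσ0 _
    · exact le_refl 0

lemma prod_sighat_nonneg (hσ0 : ∀ i, 0 ≤ σ i) (j : ℕ) :
    0 ≤ ∏ l ∈ Finset.range j, sighat σ l :=
  Finset.prod_nonneg fun l _ => sighat_nonneg hσ0 l

lemma diag_submatrix_det_le {j : ℕ} (hσ0 : ∀ i, 0 ≤ σ i)
    (hσa : ∀ i j : Fin k, i ≤ j → σ j ≤ σ i)
    (f : Fin j → Fin p) (g : Fin j → Fin k) (hg : Function.Injective g) :
    |((diagRect p k σ).submatrix f g).det| ≤
      (Nat.factorial j : ℝ) * ∏ l ∈ Finset.range j, sighat σ l := by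
  classical
  have hub : ∀ τ : Equiv.Perm (Fin j),
      |∏ a : Fin j, ((diagRect p k σ).submatrix f g) (τ a) a| ≤
        ∏ l ∈ Finset.range j, sighat σ l := by
    intro τ
    rw [Finset.abs_prod]
    have hentry : ∀ a : Fin j, |((diagRect p k σ).submatrix f g) (τ a) a| ≤ sighat σ (g a) := by
      intro a
      simp only [Matrix.submatrix_apply, diagRect, Matrix.of_apply]
      by_cases hc : ((f (τ a) : ℕ) = (g a : ℕ))
      · rw [if_pos hc, abs_of_nonneg (hσ0 _)]
        unfold sighat
        rw [dif_pos (g a).2]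
      · rw [if_neg hc, abs_zero]
        exact sighat_nonneg hσ0 _
    calc ∏ a : Fin j, |((diagRect p k σ).submatrix f g) (τ a) a|
        ≤ ∏ a : Fin j, sighat σ (g a) :=
          Finset.prod_le_prod (fun a _ => abs_nonneg _) (fun a _ => hentry a)
      _ ≤ ∏ a : Fin j, sighat σ (a : ℕ) := by
          refine prod_antitone_le (fun a => (g a : ℕ)) ?_ _ (sighat_nonneg hσ0)
            (sighat_antitone hσ0 hσa)
          exact fun a b hab => hg (Fin.val_injective hab)
      _ = ∏ l ∈ Finset.range j, sighat σ l := Fin.prod_univ_eq_prod_range _ _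
  rw [Matrix.det_apply]
  calc |∑ τ : Equiv.Perm (Fin j), Equiv.Perm.sign τ •
        ∏ a : Fin j, ((diagRect p k σ).submatrix f g) (τ a) a|
      ≤ ∑ τ : Equiv.Perm (Fin j), |Equiv.Perm.sign τ •
        ∏ a : Fin j, ((diagRect p k σ).submatrix f g) (τ a) a| := Finset.abs_sum_le_sum_abs _ _
    _ ≤ ∑ _τ : Equiv.Perm (Fin j), ∏ l ∈ Finset.range j, sighat σ l := by
        refine Finset.sum_le_sum fun τ _ => ?_
        rcases Int.units_eq_one_or (Equiv.Perm.sign τ) with h | h <;>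
          · rw [h]; simpa using hub τ
    _ = (Fintype.card (Equiv.Perm (Fin j)) : ℝ) * ∏ l ∈ Finset.range j, sighat σ l := by
        rw [Finset.sum_const, nsmul_eq_mul, Finset.card_univ]
    _ = (Nat.factorial j : ℝ) * ∏ l ∈ Finset.range j, sighat σ l := by
        rw [Fintype.card_perm, Fintype.card_fin]

lemma appendCol_apply_lt (M : Matrix (Fin p) (Fin k) ℝ) (x : Fin p → ℝ) (i : Fin p)
    (b : Fin (k + 1)) (hb : (b : ℕ) < k) :
    appendCol M x i b = M i ⟨b, hb⟩ := by
  obtain ⟨bv, hbk⟩ := b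
  show (Fin.snoc (M i) (x i) : Fin (k + 1) → ℝ) (Fin.castSucc ⟨bv, hb⟩) = M i ⟨bv, hb⟩
  exact Fin.snoc_castSucc _ _ _

lemma appendCol_apply_last (M : Matrix (Fin p) (Fin k) ℝ) (x : Fin p → ℝ) (i : Fin p)
    (b : Fin (k + 1)) (hb : (b : ℕ) = k) :
    appendCol M x i b = x i := by
  have : b = Fin.last k := by ext; exact hb
  rw [this]
  simp [appendCol, Fin.snoc_last]

lemma mul_appendCol (W : Matrix (Fin p) (Fin p) ℝ) (M : Matrix (Fin p) (Fin k) ℝ)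
    (x : Fin p → ℝ) :
    W * appendCol M x = appendCol (W * M) (W.mulVec x) := by
  ext i b
  rcases (by omega : ((b : ℕ) < k) ∨ ((b : ℕ) = k)) with hb | hb
  · rw [appendCol_apply_lt _ _ _ _ hb, Matrix.mul_apply, Matrix.mul_apply]
    exact Finset.sum_congr rfl fun l _ => by rw [appendCol_apply_lt _ _ _ _ hb]
  · rw [appendCol_apply_last _ _ _ _ hb, Matrix.mul_apply, Matrix.mulVec, dotProduct]
    exact Finset.sum_congr rfl fun l _ => by rw [appendCol_apply_last _ _ _ _ hb]

def blockify {k : ℕ} (W : Matrix (Fin k) (Fin k) ℝ) : Matrix (Fin (k + 1)) (Fin (k + 1)) ℝ :=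
  Matrix.of fun a b =>
    if ha : (a : ℕ) < k then (if hb : (b : ℕ) < k then W ⟨a, ha⟩ ⟨b, hb⟩ else 0)
    else (if (b : ℕ) < k then 0 else 1)

lemma blockify_entries {W : Matrix (Fin k) (Fin k) ℝ} (hW : ∀ a b, |W a b| ≤ 1) :
    ∀ a b, |blockify W a b| ≤ 1 := by
  intro a b
  unfold blockify
  simp only [Matrix.of_apply]
  split
  · split
    · exact hW _ _
    · simp
  · split <;> simp

lemma appendCol_mul_blockify (M : Matrix (Fin p) (Fin k) ℝ) (x : Fin p → ℝ)
    (W : Matrix (Fin k) (Fin k) ℝ) :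
    appendCol M x * blockify W = appendCol (M * W) x := by
  ext i b
  rw [Matrix.mul_apply, Fin.sum_univ_castSucc]
  have hlast : appendCol M x i (Fin.last k) = x i := appendCol_apply_last _ _ _ _ (by simp)
  have hcs : ∀ c : Fin k, appendCol M x i (Fin.castSucc c) = M i c := fun c => by
    rw [appendCol_apply_lt _ _ _ _ (by simpa using c.2 : ((Fin.castSucc c : ℕ) < k))]
    simp
  rcases (by omega : ((b : ℕ) < k) ∨ ((b : ℕ) = k)) with hb | hb
  · rw [appendCol_apply_lt _ _ _ _ hb, Matrix.mul_apply]
    have hbl : blockify W (Fin.last k) b = 0 := by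
      unfold blockify
      simp only [Matrix.of_apply, Fin.val_last]
      rw [dif_neg (lt_irrefl k), if_pos hb]
    rw [hlast, hbl, mul_zero, add_zero]
    refine Finset.sum_congr rfl fun c _ => ?_
    rw [hcs c]
    congr 1
    unfold blockify
    simp only [Matrix.of_apply, Fin.coe_castSucc]
    rw [dif_pos c.2, dif_pos hb]
  · rw [appendCol_apply_last _ _ _ _ hb]
    have hbl : blockify W (Fin.last k) b = 1 := by
      unfold blockify
      simp only [Matrix.of_apply, Fin.val_last]
      rw [dif_neg (lt_irrefl k), if_neg (by omega)]
    have hz : ∀ c : Fin k, blockify W (Fin.castSucc c) b = 0 := fun c => by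
      unfold blockify
      simp only [Matrix.of_apply, Fin.coe_castSucc]
      rw [dif_pos c.2, dif_neg (by omega)]
    rw [hlast, hbl, mul_one]
    have : ∀ c : Fin k, appendCol M x i (Fin.castSucc c) * blockify W (Fin.castSucc c) b = 0 :=
      fun c => by rw [hz c, mul_zero]
    rw [Finset.sum_congr rfl (fun c _ => this c), Finset.sum_const_zero, zero_add]

lemma minor_eq {p k : ℕ} (σ : Fin k → ℝ) (y : Fin p → ℝ) (j : ℕ) (hjk : j ≤ k)
    (hkp : k < p) (i : Fin p) (hji : j ≤ (i : ℕ)) :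
    ∃ (f : Fin (j + 1) → Fin p) (g : Fin (j + 1) → Fin (k + 1)),
      Function.Injective f ∧ Function.Injective g ∧
      |(((appendCol (diagRect p k σ) y)).submatrix f g).det| =
        |y i| * |∏ l ∈ Finset.range j, sighat σ l| := by
  classical
  have hjp : j < p := lt_of_le_of_lt hjk hkp
  have hjk1 : j < k + 1 := Nat.lt_succ_of_le hjk
  set f : Fin (j + 1) → Fin p :=
    (fun a => if ha : (a : ℕ) < j then ⟨(a : ℕ), lt_trans ha hjp⟩ else i) with hf
  set g : Fin (j + 1) → Fin (k + 1) :=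
    (fun a => if ha : (a : ℕ) < j then ⟨(a : ℕ), lt_trans ha hjk1⟩
      else ⟨k, Nat.lt_succ_self k⟩) with hg
  have hfval : ∀ a : Fin (j + 1), ((f a) : ℕ) = if (a : ℕ) < j then (a : ℕ) else (i : ℕ) := by
    intro a; by_cases h : (a : ℕ) < j <;> simp [hf, h]
  have hgval : ∀ a : Fin (j + 1), ((g a) : ℕ) = if (a : ℕ) < j then (a : ℕ) else k := by
    intro a; by_cases h : (a : ℕ) < j <;> simp [hg, h]
  have hfi : Function.Injective f := by
    intro a b hab
    have hv := congrArg Fin.val hab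
    rw [hfval, hfval] at hv
    apply Fin.ext
    split_ifs at hv <;> omega
  have hgi : Function.Injective g := by
    intro a b hab
    have hv := congrArg Fin.val hab
    rw [hgval, hgval] at hv
    apply Fin.ext
    split_ifs at hv <;> omega
  refine ⟨f, g, hfi, hgi, ?_⟩
  set S := (appendCol (diagRect p k σ) y).submatrix f g with hS
  have hfl : f (Fin.last j) = i := by simp [hf]
  have hgl : g (Fin.last j) = ⟨k, Nat.lt_succ_self k⟩ := by simp [hg]
  have hrow : ∀ b : Fin (j + 1), (b : ℕ) < j → S (Fin.last j) b = 0 := by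
    intro b hb
    have hgb : g b = ⟨(b : ℕ), lt_trans hb hjk1⟩ := by simp [hg, hb]
    rw [hS, Matrix.submatrix_apply, hfl, hgb,
      appendCol_apply_lt _ _ _ _ (show ((⟨(b : ℕ), lt_trans hb hjk1⟩ : Fin (k + 1)) : ℕ) < k
        from lt_of_lt_of_le hb hjk)]
    simp only [diagRect, Matrix.of_apply]
    rw [if_neg (show ¬ ((i : ℕ) = (b : ℕ)) by omega)]
  have hlastlast : S (Fin.last j) (Fin.last j) = y i := by
    rw [hS, Matrix.submatrix_apply, hfl, hgl, appendCol_apply_last _ _ _ _ rfl]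
  have hsub : S.submatrix Fin.castSucc Fin.castSucc =
      Matrix.diagonal (fun a : Fin j => sighat σ (a : ℕ)) := by
    ext a b
    have hacs : ((Fin.castSucc a : Fin (j + 1)) : ℕ) = (a : ℕ) := rfl
    have hbcs : ((Fin.castSucc b : Fin (j + 1)) : ℕ) = (b : ℕ) := rfl
    have hfa : f (Fin.castSucc a) = ⟨(a : ℕ), lt_trans a.2 hjp⟩ := by
      apply Fin.ext; rw [hfval, hacs, if_pos a.2]
    have hgb : g (Fin.castSucc b) = ⟨(b : ℕ), lt_trans b.2 hjk1⟩ := by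
      apply Fin.ext; rw [hgval, hbcs, if_pos b.2]
    rw [Matrix.submatrix_apply, hS, Matrix.submatrix_apply, hfa, hgb,
      appendCol_apply_lt _ _ _ _ (show ((⟨(b : ℕ), lt_trans b.2 hjk1⟩ : Fin (k + 1)) : ℕ) < k
        from lt_of_lt_of_le b.2 hjk)]
    simp only [diagRect, Matrix.of_apply]
    by_cases hab : (a : ℕ) = (b : ℕ)
    · rw [if_pos hab]
      have hab' : a = b := Fin.ext hab
      subst hab'
      rw [Matrix.diagonal_apply_eq]
      unfold sighat
      rw [dif_pos (lt_of_lt_of_le a.2 hjk : (a : ℕ) < k)]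
    · rw [if_neg hab,
        Matrix.diagonal_apply_ne _ (fun h => hab (congrArg Fin.val h))]
  have hdet : S.det = y i * ∏ l ∈ Finset.range j, sighat σ l := by
    rw [Matrix.det_succ_row S (Fin.last j)]
    rw [Finset.sum_eq_single (Fin.last j)]
    · rw [hlastlast]
      have hsa : (Fin.last j).succAbove = Fin.castSucc := Fin.succAbove_last
      rw [hsa, hsub, Matrix.det_diagonal]
      rw [Fin.prod_univ_eq_prod_range (fun l => sighat σ l) j]
      have hsign : ((-1 : ℝ)) ^ ((Fin.last j : ℕ) + (Fin.last j : ℕ)) = 1 := by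
        rw [← two_mul]
        exact Even.neg_one_pow (even_two_mul _)
      rw [hsign, one_mul]
    · intro b _ hb
      have hbj : (b : ℕ) < j := by
        rcases lt_or_eq_of_le (Nat.lt_succ_iff.mp b.2) with h | h
        · exact h
        · exact absurd (Fin.ext h : b = Fin.last j) hb
      rw [hrow b hbj, mul_zero, zero_mul]
    · intro h
      exact absurd (Finset.mem_univ _) h
  rw [hdet, abs_mul]


end Helpers

/-- if `x ∈ S(M,R)`, i.e. appending the column `x` to `M` increases the maximal
subdeterminants `D_j` by at most a factor `C` (for `1 ≤ j ≤ k`) and `D_{k+1}(M|x) ≤ R`, then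
`x = U y` with `|yᵢ| ≤ C'(C,p,k)·τᵢ`, where `M = U (Σ;0) V` is a singular value decomposition,
`τᵢ = σᵢ` for `i ≤ k` and `τᵢ = min(σ_k, R / D_k(M))` for `i ≥ k+1`. -/
theorem stmt14 (p k : ℕ) (hp : k + 1 ≤ p) (hk : 0 < k) (C : ℝ) (hC : 0 < C) :
    ∃ C' : ℝ, 0 < C' ∧
      ∀ (R : ℝ) (U : Matrix (Fin p) (Fin p) ℝ) (V : Matrix (Fin k) (Fin k) ℝ)
        (σ : Fin k → ℝ) (Mk : Matrix (Fin p) (Fin k) ℝ),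
        0 < R → Uᵀ * U = 1 → Vᵀ * V = 1 →
        (∀ i, 0 ≤ σ i) → (∀ i j : Fin k, i ≤ j → σ j ≤ σ i) →
        Mk = U * diagRect p k σ * V →
        ∀ x : Fin p → ℝ,
          (∀ j : ℕ, 1 ≤ j → j ≤ k →
            maxSubdet j (appendCol Mk x) ≤ C * maxSubdet j Mk) →
          maxSubdet (k + 1) (appendCol Mk x) ≤ R →
          ∃ y : Fin p → ℝ,
            (∀ i : Fin p,
              |y i| ≤ C' * (if h : (i : ℕ) < k then σ ⟨(i : ℕ), h⟩
                else min (σ ⟨k - 1, by omega⟩) (R / maxSubdet k Mk))) ∧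
            x = U.mulVec y := by
  classical
  have hkp : k < p := by omega
  have hp1 : (1 : ℝ) ≤ (p : ℝ) := by exact_mod_cast Nat.one_le_iff_ne_zero.mpr (by omega)
  have hk1 : (1 : ℝ) ≤ ((k + 1 : ℕ) : ℝ) := by exact_mod_cast Nat.succ_le_succ (Nat.zero_le k)
  set E : ℝ := (p : ℝ) ^ (k + 1) * ((k + 1 : ℕ) : ℝ) ^ (k + 1) with hE
  have hE1 : (1 : ℝ) ≤ E := by
    rw [hE]
    calc (1 : ℝ) = 1 * 1 := (one_mul 1).symm
    _ ≤ (p : ℝ) ^ (k + 1) * ((k + 1 : ℕ) : ℝ) ^ (k + 1) :=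
        mul_le_mul (one_le_pow₀ hp1) (one_le_pow₀ hk1) zero_le_one (by positivity)
  have hE0 : (0 : ℝ) < E := lt_of_lt_of_le zero_lt_one hE1
  set G : ℝ := E * E * ((Nat.factorial (k + 1) : ℕ) : ℝ) with hG
  have hfac1 : (1 : ℝ) ≤ ((Nat.factorial (k + 1) : ℕ) : ℝ) := by
    exact_mod_cast Nat.one_le_iff_ne_zero.mpr (Nat.factorial_ne_zero _)
  have hG1 : (1 : ℝ) ≤ G := by
    rw [hG]
    calc (1 : ℝ) = 1 * 1 := (one_mul 1).symm
    _ ≤ E * E * ((Nat.factorial (k + 1) : ℕ) : ℝ) :=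
        mul_le_mul (by nlinarith) hfac1 zero_le_one (by positivity)
  have hG0 : (0 : ℝ) < G := lt_of_lt_of_le zero_lt_one hG1
  refine ⟨G * (C + 1), by positivity, ?_⟩
  intro R U V σ Mk hR hU hV hσ0 hσa hMk x hDj hDk1
  -- basic setup
  have hUU : U * Uᵀ = 1 := mul_eq_one_comm.mp hU
  have hVV : V * Vᵀ = 1 := mul_eq_one_comm.mp hV
  set y : Fin p → ℝ := Uᵀ.mulVec x with hy
  set N := appendCol Mk x with hN
  set Ay := appendCol (diagRect p k σ) y with hAy
  have hxy : x = U.mulVec y := by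
    rw [hy, Matrix.mulVec_mulVec, hUU, Matrix.one_mulVec]
  have hUtM : Uᵀ * Mk = diagRect p k σ * V := by
    rw [hMk, ← Matrix.mul_assoc, ← Matrix.mul_assoc, hU, Matrix.one_mul]
  have hAyeq : Ay = Uᵀ * N * blockify Vᵀ := by
    rw [hN, Matrix.mul_assoc (Uᵀ)]
    rw [show Uᵀ * (appendCol Mk x * blockify Vᵀ) = Uᵀ * appendCol Mk x * blockify Vᵀ from
      (Matrix.mul_assoc _ _ _).symm]
    rw [mul_appendCol, hUtM, appendCol_mul_blockify, Matrix.mul_assoc, hVV, Matrix.mul_one]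
  have hUte : ∀ a b, |Uᵀ a b| ≤ 1 := fun a b => entries_le_one hU b a
  have hVte : ∀ a b, |(Vᵀ : Matrix (Fin k) (Fin k) ℝ) a b| ≤ 1 := fun a b =>
    entries_le_one (by rw [Matrix.transpose_transpose]; exact hVV) a b
  have hBVte : ∀ a b, |blockify Vᵀ a b| ≤ 1 := blockify_entries hVte
  set P : ℕ → ℝ := fun j => ∏ l ∈ Finset.range j, sighat σ l with hP
  have hPnn : ∀ j, 0 ≤ P j := fun j => prod_sighat_nonneg hσ0 j
  -- transfer Ay → N
  have F4 : ∀ j : ℕ, maxSubdet j Ay ≤ (p : ℝ) ^ j * ((k + 1 : ℕ) : ℝ) ^ j * maxSubdet j N := by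
    intro j
    rw [hAyeq, Matrix.mul_assoc]
    calc maxSubdet j (Uᵀ * (N * blockify Vᵀ))
        ≤ (p : ℝ) ^ j * maxSubdet j (N * blockify Vᵀ) :=
          maxSubdet_mul_left_le j _ _ hUte
      _ ≤ (p : ℝ) ^ j * (((k + 1 : ℕ) : ℝ) ^ j * maxSubdet j N) := by
          refine mul_le_mul_of_nonneg_left ?_ (by positivity)
          simpa using maxSubdet_mul_right_le j (blockify Vᵀ) N hBVte
      _ = (p : ℝ) ^ j * ((k + 1 : ℕ) : ℝ) ^ j * maxSubdet j N := by ring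
  -- transfer Mk → P
  have F56 : ∀ j : ℕ, maxSubdet j Mk ≤
      (p : ℝ) ^ j * (k : ℝ) ^ j * ((Nat.factorial j : ℕ) : ℝ) * P j := by
    intro j
    have h1 : maxSubdet j Mk ≤ (p : ℝ) ^ j * maxSubdet j (diagRect p k σ * V) := by
      rw [hMk, Matrix.mul_assoc]
      exact maxSubdet_mul_left_le j _ _ (fun a b => entries_le_one (by
        rw [← Matrix.transpose_transpose U] at hUU
        exact mul_eq_one_comm.mp (by simpa using hUU)) a b)
    have h2 : maxSubdet j (diagRect p k σ * V) ≤ (k : ℝ) ^ j * maxSubdet j (diagRect p k σ) :=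
      maxSubdet_mul_right_le j V _ (fun a b => entries_le_one hV a b)
    have h3 : maxSubdet j (diagRect p k σ) ≤ ((Nat.factorial j : ℕ) : ℝ) * P j := by
      exact maxSubdet_le (mul_nonneg (by positivity) (hPnn j))
        (fun f g hf hg => diag_submatrix_det_le hσ0 hσa f g hg)
    calc maxSubdet j Mk ≤ (p : ℝ) ^ j * maxSubdet j (diagRect p k σ * V) := h1
      _ ≤ (p : ℝ) ^ j * ((k : ℝ) ^ j * maxSubdet j (diagRect p k σ)) :=
          mul_le_mul_of_nonneg_left h2 (by positivity)
      _ ≤ (p : ℝ) ^ j * ((k : ℝ) ^ j * (((Nat.factorial j : ℕ) : ℝ) * P j)) :=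
          mul_le_mul_of_nonneg_left (mul_le_mul_of_nonneg_left h3 (by positivity)) (by positivity)
      _ = (p : ℝ) ^ j * (k : ℝ) ^ j * ((Nat.factorial j : ℕ) : ℝ) * P j := by ring
  -- P k is dominated by maxSubdet k Mk
  have F8 : P k ≤ (p : ℝ) ^ k * (k : ℝ) ^ k * maxSubdet k Mk := by
    have hDV : diagRect p k σ = Uᵀ * (Mk * Vᵀ) := by
      rw [hMk, Matrix.mul_assoc, Matrix.mul_assoc, hVV, Matrix.mul_one, ← Matrix.mul_assoc,
        hU, Matrix.one_mul]
    set fc : Fin k → Fin p := fun a => ⟨(a : ℕ), lt_trans a.2 hkp⟩ with hfc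
    have hfci : Function.Injective fc := by
      intro a b hab
      have hv : ((fc a : Fin p) : ℕ) = ((fc b : Fin p) : ℕ) := congrArg Fin.val hab
      rw [hfc] at hv
      exact Fin.ext hv
    have hdiagdet : ((diagRect p k σ).submatrix fc id).det = P k := by
      have : (diagRect p k σ).submatrix fc id =
          Matrix.diagonal (fun a : Fin k => sighat σ (a : ℕ)) := by
        ext a b
        simp only [Matrix.submatrix_apply, diagRect, Matrix.of_apply, hfc, id_eq]
        by_cases hab : (a : ℕ) = (b : ℕ)
        · have hab' : a = b := Fin.ext hab
          subst hab'
          rw [if_pos rfl, Matrix.diagonal_apply_eq]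
          unfold sighat
          rw [dif_pos a.2]
        · rw [if_neg hab, Matrix.diagonal_apply_ne _ (fun h => hab (congrArg Fin.val h))]
      rw [this, Matrix.det_diagonal, Fin.prod_univ_eq_prod_range (fun l => sighat σ l) k]
    have h1 : |((diagRect p k σ).submatrix fc id).det| ≤
        (p : ℝ) ^ k * maxSubdet k (Mk * Vᵀ) := by
      rw [hDV]
      exact det_submatrix_mul_left_le _ _ hUte fc id Function.injective_id
    have h2 : maxSubdet k (Mk * Vᵀ) ≤ (k : ℝ) ^ k * maxSubdet k Mk :=
      maxSubdet_mul_right_le k Vᵀ Mk hVte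
    have h3 : P k = |((diagRect p k σ).submatrix fc id).det| := by
      rw [hdiagdet, abs_of_nonneg (hPnn k)]
    calc P k = |((diagRect p k σ).submatrix fc id).det| := h3
      _ ≤ (p : ℝ) ^ k * maxSubdet k (Mk * Vᵀ) := h1
      _ ≤ (p : ℝ) ^ k * ((k : ℝ) ^ k * maxSubdet k Mk) :=
          mul_le_mul_of_nonneg_left h2 (by positivity)
      _ = (p : ℝ) ^ k * (k : ℝ) ^ k * maxSubdet k Mk := by ring
  -- main minor inequality
  have step1 : ∀ (i : Fin p) (j : ℕ), j ≤ k → j ≤ (i : ℕ) →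
      |y i| * P j ≤ (p : ℝ) ^ (j + 1) * ((k + 1 : ℕ) : ℝ) ^ (j + 1) * maxSubdet (j + 1) N := by
    intro i j hjk hji
    obtain ⟨f, g, hf, hg, hdet⟩ := minor_eq σ y j hjk hkp i hji
    have h1 : |y i| * P j = |(Ay.submatrix f g).det| := by
      rw [hAy, hdet, abs_of_nonneg (hPnn j)]
    rw [h1]
    calc |(Ay.submatrix f g).det| ≤ maxSubdet (j + 1) Ay := le_maxSubdet Ay f g hf hg
      _ ≤ (p : ℝ) ^ (j + 1) * ((k + 1 : ℕ) : ℝ) ^ (j + 1) * maxSubdet (j + 1) N := F4 (j + 1)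
  -- constant comparisons
  have hEj : ∀ j : ℕ, j ≤ k + 1 → (p : ℝ) ^ j * ((k + 1 : ℕ) : ℝ) ^ j ≤ E := by
    intro j hj
    rw [hE]
    exact mul_le_mul (pow_le_pow_right₀ hp1 hj) (pow_le_pow_right₀ hk1 hj)
      (by positivity) (by positivity)
  have hFj : ∀ j : ℕ, j ≤ k + 1 →
      (p : ℝ) ^ j * (k : ℝ) ^ j * ((Nat.factorial j : ℕ) : ℝ) ≤
        E * ((Nat.factorial (k + 1) : ℕ) : ℝ) := by
    intro j hj
    have hkk1 : (k : ℝ) ^ j ≤ ((k + 1 : ℕ) : ℝ) ^ j :=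
      pow_le_pow_left₀ (by positivity) (by exact_mod_cast Nat.le_succ k) j
    have hfacj : ((Nat.factorial j : ℕ) : ℝ) ≤ ((Nat.factorial (k + 1) : ℕ) : ℝ) := by
      exact_mod_cast Nat.factorial_le hj
    calc (p : ℝ) ^ j * (k : ℝ) ^ j * ((Nat.factorial j : ℕ) : ℝ)
        ≤ (p : ℝ) ^ j * ((k + 1 : ℕ) : ℝ) ^ j * ((Nat.factorial (k + 1) : ℕ) : ℝ) := by
          refine mul_le_mul (mul_le_mul_of_nonneg_left hkk1 (by positivity)) hfacj
            (by positivity) (by positivity)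
      _ ≤ E * ((Nat.factorial (k + 1) : ℕ) : ℝ) :=
          mul_le_mul_of_nonneg_right (hEj j hj) (by positivity)
  -- bounded case: σ's positive up to j, level j+1 ≤ k
  have key : ∀ (i : Fin p) (j : ℕ), j + 1 ≤ k → j ≤ (i : ℕ) →
      (∀ l, l < j → 0 < sighat σ l) → |y i| ≤ G * C * sighat σ j := by
    intro i j hjk1 hji hpos
    have hPj : 0 < P j := Finset.prod_pos fun l hl => hpos l (Finset.mem_range.mp hl)
    have h1 := step1 i j (by omega) hji
    have h2 : maxSubdet (j + 1) N ≤ C * maxSubdet (j + 1) Mk :=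
      hDj (j + 1) (by omega) hjk1
    have h3 := F56 (j + 1)
    have hPsucc : P (j + 1) = P j * sighat σ j := Finset.prod_range_succ _ _
    have chain : |y i| * P j ≤ E * (C * (E * ((Nat.factorial (k + 1) : ℕ) : ℝ) *
        (P j * sighat σ j))) := by
      calc |y i| * P j
          ≤ (p : ℝ) ^ (j + 1) * ((k + 1 : ℕ) : ℝ) ^ (j + 1) * maxSubdet (j + 1) N := h1
        _ ≤ E * maxSubdet (j + 1) N := by
            refine mul_le_mul_of_nonneg_right (hEj (j + 1) (by omega)) ?_
            exact maxSubdet_nonneg _ _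
        _ ≤ E * (C * maxSubdet (j + 1) Mk) :=
            mul_le_mul_of_nonneg_left h2 (le_of_lt hE0)
        _ ≤ E * (C * ((p : ℝ) ^ (j + 1) * (k : ℝ) ^ (j + 1) *
              ((Nat.factorial (j + 1) : ℕ) : ℝ) * P (j + 1))) := by
            refine mul_le_mul_of_nonneg_left (mul_le_mul_of_nonneg_left h3 (le_of_lt hC))
              (le_of_lt hE0)
        _ ≤ E * (C * (E * ((Nat.factorial (k + 1) : ℕ) : ℝ) * (P j * sighat σ j))) := by
            rw [← hPsucc]
            refine mul_le_mul_of_nonneg_left (mul_le_mul_of_nonneg_left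
              (mul_le_mul_of_nonneg_right (hFj (j + 1) (by omega)) (hPnn (j + 1)))
              (le_of_lt hC)) (le_of_lt hE0)
    have : |y i| * P j ≤ (G * C * sighat σ j) * P j := by
      calc |y i| * P j ≤ E * (C * (E * ((Nat.factorial (k + 1) : ℕ) : ℝ) *
          (P j * sighat σ j))) := chain
        _ = (G * C * sighat σ j) * P j := by rw [hG]; ring
    exact le_of_mul_le_mul_right this hPj
  -- zero case
  have keyzero : ∀ (i : Fin p) (jt : ℕ), jt ≤ k → jt ≤ (i : ℕ) →
      ¬ (∀ l, l < jt → 0 < sighat σ l) → y i = 0 := by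
    intro i jt hjtk hjti hnpos
    push_neg at hnpos
    obtain ⟨l0, hl0, hl0z⟩ := hnpos
    have hQ : ∃ l, sighat σ l = 0 ∧ l < jt :=
      ⟨l0, le_antisymm hl0z (sighat_nonneg hσ0 l0), hl0⟩
    set m := Nat.find hQ with hm
    obtain ⟨hmz, hmlt⟩ := Nat.find_spec hQ
    have hmin : ∀ l, l < m → 0 < sighat σ l := by
      intro l hl
      rcases lt_or_eq_of_le (sighat_nonneg hσ0 l) with h | h
      · exact h
      · exact absurd ⟨h.symm, by omega⟩ (Nat.find_min hQ hl)
    have hb := key i m (by omega) (by omega) hmin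
    rw [hmz, mul_zero] at hb
    exact abs_eq_zero.mp (le_antisymm hb (abs_nonneg _))
  -- conclusion
  refine ⟨y, ?_, hxy⟩
  intro i
  have hGC0 : 0 ≤ G * (C + 1) := by positivity
  by_cases hik : (i : ℕ) < k
  · rw [dif_pos hik]
    have hsig : sighat σ (i : ℕ) = σ ⟨(i : ℕ), hik⟩ := by
      unfold sighat; rw [dif_pos hik]
    by_cases hpos : ∀ l, l < (i : ℕ) → 0 < sighat σ l
    · have := key i (i : ℕ) (by omega) le_rfl hpos
      rw [hsig] at this
      refine le_trans this ?_
      refine mul_le_mul_of_nonneg_right ?_ (hσ0 _)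
      refine mul_le_mul_of_nonneg_left ?_ (le_of_lt hG0)
      linarith
    · rw [keyzero i (i : ℕ) (by omega) le_rfl hpos, abs_zero]
      exact mul_nonneg hGC0 (hσ0 _)
  · rw [dif_neg hik]
    have hki : k ≤ (i : ℕ) := by omega
    have hsig : sighat σ (k - 1) = σ ⟨k - 1, by omega⟩ := by
      unfold sighat; rw [dif_pos (by omega : k - 1 < k)]
    -- bound 1 : via σ (k-1)
    have bound1 : |y i| ≤ G * (C + 1) * σ ⟨k - 1, by omega⟩ := by
      by_cases hpos : ∀ l, l < k - 1 → 0 < sighat σ l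
      · have := key i (k - 1) (by omega) (by omega) hpos
        rw [hsig] at this
        refine le_trans this ?_
        refine mul_le_mul_of_nonneg_right ?_ (hσ0 _)
        refine mul_le_mul_of_nonneg_left ?_ (le_of_lt hG0)
        linarith
      · rw [keyzero i (k - 1) (by omega) (by omega) hpos, abs_zero]
        exact mul_nonneg hGC0 (hσ0 _)
    -- bound 2 : via R / maxSubdet k Mk
    have hDnn : 0 ≤ maxSubdet k Mk := maxSubdet_nonneg _ _
    have bound2 : |y i| ≤ G * (C + 1) * (R / maxSubdet k Mk) := by
      by_cases hpos : ∀ l, l < k → 0 < sighat σ l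
      · have hPk : 0 < P k := Finset.prod_pos fun l hl => hpos l (Finset.mem_range.mp hl)
        have hD0 : 0 < maxSubdet k Mk := by
          by_contra hD
          push_neg at hD
          have hDz : maxSubdet k Mk = 0 := le_antisymm hD hDnn
          have := F8
          rw [hDz, mul_zero] at this
          exact absurd this (not_le.mpr hPk)
        have h1 := step1 i k le_rfl hki
        have h2 : |y i| * P k ≤ E * R := by
          calc |y i| * P k
              ≤ (p : ℝ) ^ (k + 1) * ((k + 1 : ℕ) : ℝ) ^ (k + 1) * maxSubdet (k + 1) N := h1
            _ ≤ E * maxSubdet (k + 1) N :=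
                mul_le_mul_of_nonneg_right (hEj (k + 1) le_rfl) (maxSubdet_nonneg _ _)
            _ ≤ E * R := mul_le_mul_of_nonneg_left hDk1 (le_of_lt hE0)
        have h3 : |y i| * maxSubdet k Mk ≤ G * R := by
          calc |y i| * maxSubdet k Mk
              ≤ |y i| * ((p : ℝ) ^ k * (k : ℝ) ^ k * ((Nat.factorial k : ℕ) : ℝ) * P k) :=
                mul_le_mul_of_nonneg_left (F56 k) (abs_nonneg _)
            _ = (p : ℝ) ^ k * (k : ℝ) ^ k * ((Nat.factorial k : ℕ) : ℝ) * (|y i| * P k) := by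
                ring
            _ ≤ (p : ℝ) ^ k * (k : ℝ) ^ k * ((Nat.factorial k : ℕ) : ℝ) * (E * R) :=
                mul_le_mul_of_nonneg_left h2 (by positivity)
            _ ≤ E * ((Nat.factorial (k + 1) : ℕ) : ℝ) * (E * R) :=
                mul_le_mul_of_nonneg_right (hFj k (by omega)) (by positivity)
            _ = G * R := by rw [hG]; ring
        have : |y i| ≤ G * R / maxSubdet k Mk := by
          rw [le_div_iff₀ hD0]
          linarith
        calc |y i| ≤ G * R / maxSubdet k Mk := this
          _ = G * (R / maxSubdet k Mk) := by ring
          _ ≤ G * (C + 1) * (R / maxSubdet k Mk) := by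
              refine mul_le_mul_of_nonneg_right ?_ (div_nonneg (le_of_lt hR) hDnn)
              nlinarith
      · rw [keyzero i k le_rfl hki hpos, abs_zero]
        exact mul_nonneg hGC0 (div_nonneg (le_of_lt hR) hDnn)
    rcases min_cases (σ ⟨k - 1, by omega⟩) (R / maxSubdet k Mk) with ⟨hmin, _⟩ | ⟨hmin, _⟩ <;>
      rw [hmin]
    · exact bound1
    · exact bound2
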